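/- Let g : ℝ^d → ℝ ∪ {+∞} be proper, convex, lower semicontinuous and let f : ℝ^d → ℝ be a convex differentiable function whose gradient ∇f is L-Lipschitz. Fix x ∈ ℝ^d, a stepsize α with 0 < α ≤ 1/L, and set x⁺ = prox_{αg}(x − α∇f(x)). Then (g+f)(x⁺) ≤ (g+f)(x); in particular, if (x_k) is a proximal-gradient sequence with stepsizes α_k ∈ (0, 1/L], the values (g+f)(x_k) are nonincreasing in k. -/

import Mathlib

open scoped InnerProductSpace RealInnerProductSpace

/-- Convexity for an extended-real-valued function. -/
def ERealConvex {d : ℕ} (g : EuclideanSpace ℝ (Fin d) → EReal) : Prop :=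
  ∀ x y : EuclideanSpace ℝ (Fin d), ∀ a b : ℝ, 0 ≤ a → 0 ≤ b → a + b = 1 →
    g (a • x + b • y) ≤ (a : EReal) * g x + (b : EReal) * g y

/-- `g` is proper: it never takes the value `⊥` and is not identically `⊤`. -/
def ERealProper {d : ℕ} (g : EuclideanSpace ℝ (Fin d) → EReal) : Prop :=
  (∀ x, g x ≠ ⊥) ∧ (∃ x, g x ≠ ⊤)

/-- `p = prox_{αg}(y)`, i.e. `p` minimizes `z ↦ g z + (1/(2α))‖z - y‖²`. -/
def IsProx {d : ℕ} (g : EuclideanSpace ℝ (Fin d) → EReal) (α : ℝ)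
    (y p : EuclideanSpace ℝ (Fin d)) : Prop :=
  ∀ z, g p + ((1 / (2 * α) * ‖p - y‖ ^ 2 : ℝ) : EReal)
      ≤ g z + ((1 / (2 * α) * ‖z - y‖ ^ 2 : ℝ) : EReal)

lemma descent_lemma {d : ℕ} {L : ℝ}
    (f : EuclideanSpace ℝ (Fin d) → ℝ)
    (f' : EuclideanSpace ℝ (Fin d) → EuclideanSpace ℝ (Fin d))
    (hf_diff : ∀ y, HasGradientAt f (f' y) y)
    (hf_lip : ∀ x y, ‖f' x - f' y‖ ≤ L * ‖x - y‖)
    (x y : EuclideanSpace ℝ (Fin d)) :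
    f y ≤ f x + ⟪f' x, y - x⟫_ℝ + L / 2 * ‖y - x‖ ^ 2 := by
  set u := y - x with hu
  set φ : ℝ → ℝ := fun t => L * t ^ 2 / 2 * ‖u‖ ^ 2 + f x + t * ⟪f' x, u⟫_ℝ - f (x + t • u)
    with hφ
  have hderiv : ∀ t : ℝ, HasDerivAt φ
      (L * t * ‖u‖ ^ 2 + ⟪f' x, u⟫_ℝ - ⟪f' (x + t • u), u⟫_ℝ) t := by
    intro t
    have h1 : HasDerivAt (fun t : ℝ => x + t • u) u t := by
      simpa using ((hasDerivAt_id t).smul_const u).const_add x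
    have h2 : HasDerivAt (fun t : ℝ => f (x + t • u)) ⟪f' (x + t • u), u⟫_ℝ t := by
      have := (hf_diff (x + t • u)).hasFDerivAt.comp_hasDerivAt t h1
      exact this
    have h3 : HasDerivAt (fun t : ℝ => L * t ^ 2 / 2 * ‖u‖ ^ 2 + f x + t * ⟪f' x, u⟫_ℝ)
        (L * t * ‖u‖ ^ 2 + ⟪f' x, u⟫_ℝ) t := by
      have := (((hasDerivAt_pow 2 t).const_mul L).div_const 2).mul_const (‖u‖ ^ 2)
      have h4 := (this.add_const (f x)).add ((hasDerivAt_id t).mul_const ⟪f' x, u⟫_ℝ)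
      convert h4 using 1
      · rfl
      · rfl
      · rfl
      · rw [show (2:ℕ) - 1 = 1 from rfl]; push_cast; ring
    exact h3.sub h2
  have hmono : φ 0 ≤ φ 1 := by
    have hc : ContinuousOn φ (Set.Icc 0 1) :=
      fun t _ => (hderiv t).continuousAt.continuousWithinAt
    have hd : ∀ t ∈ interior (Set.Icc (0:ℝ) 1), 0 ≤ deriv φ t := by
      intro t ht
      rw [interior_Icc] at ht
      rw [(hderiv t).deriv]
      have hineq : ⟪f' (x + t • u), u⟫_ℝ - ⟪f' x, u⟫_ℝ ≤ L * t * ‖u‖ ^ 2 := by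
        have h1 : ⟪f' (x + t • u) - f' x, u⟫_ℝ ≤ ‖f' (x + t • u) - f' x‖ * ‖u‖ :=
          real_inner_le_norm _ _
        have h2 : ‖f' (x + t • u) - f' x‖ ≤ L * ‖t • u‖ := by
          have := hf_lip (x + t • u) x
          simpa using this
        have h3 : ‖t • u‖ = t * ‖u‖ := by
          rw [norm_smul, Real.norm_eq_abs, abs_of_pos ht.1]
        rw [inner_sub_left] at h1
        rw [h3] at h2
        nlinarith [norm_nonneg u, mul_le_mul_of_nonneg_right h2 (norm_nonneg u)]
      linarith
    have := monotoneOn_of_deriv_nonneg (convex_Icc 0 1) hc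
      (fun t ht => (hderiv t).differentiableAt.differentiableWithinAt) hd
    exact this (Set.left_mem_Icc.2 zero_le_one) (Set.right_mem_Icc.2 zero_le_one) zero_le_one
  have h0 : φ 0 = 0 := by simp [hφ]
  have h1 : φ 1 = L / 2 * ‖u‖ ^ 2 + f x + ⟪f' x, u⟫_ℝ - f y := by
    simp only [hφ, one_pow, one_mul, one_smul]
    rw [hu, show x + (y - x) = y by abel]
    ring
  rw [h0, h1] at hmono
  linarith


lemma prox_step {d : ℕ} {L : ℝ}
    (g : EuclideanSpace ℝ (Fin d) → EReal)
    (hg_proper : ERealProper g)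
    (f : EuclideanSpace ℝ (Fin d) → ℝ)
    (f' : EuclideanSpace ℝ (Fin d) → EuclideanSpace ℝ (Fin d))
    (hf_diff : ∀ y, HasGradientAt f (f' y) y)
    (hf_lip : ∀ x y, ‖f' x - f' y‖ ≤ L * ‖x - y‖)
    (hL : 0 < L)
    (x : EuclideanSpace ℝ (Fin d)) (α : ℝ) (hα : 0 < α) (hαL : α ≤ 1 / L)
    (xp : EuclideanSpace ℝ (Fin d))
    (hxp : IsProx g α (x - α • f' x) xp) :
    g xp + (f xp : EReal) ≤ g x + (f x : EReal) := by
  obtain ⟨hbot, z₀, hz₀⟩ := hg_proper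
  by_cases hx : g x = ⊤
  · rw [hx, EReal.top_add_of_ne_bot (EReal.coe_ne_bot _)]
    exact le_top
  -- g xp ≠ ⊤
  have hxp_ne_top : g xp ≠ ⊤ := by
    intro htop
    have h := hxp z₀
    rw [htop, EReal.top_add_of_ne_bot (EReal.coe_ne_bot _)] at h
    have hz : g z₀ = ((g z₀).toReal : EReal) := (EReal.coe_toReal hz₀ (hbot z₀)).symm
    rw [hz, ← EReal.coe_add] at h
    exact absurd (top_le_iff.1 h) (EReal.coe_ne_top _)
  set gp : ℝ := (g xp).toReal with hgp
  set gx : ℝ := (g x).toReal with hgx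
  have hgp_eq : g xp = (gp : EReal) := (EReal.coe_toReal hxp_ne_top (hbot xp)).symm
  have hgx_eq : g x = (gx : EReal) := (EReal.coe_toReal hx (hbot x)).symm
  have h := hxp x
  rw [hgp_eq, hgx_eq, ← EReal.coe_add, ← EReal.coe_add, EReal.coe_le_coe_iff] at h
  set u := xp - x with hu
  set v := f' x with hv
  have e1 : xp - (x - α • v) = u + α • v := by rw [hu]; abel
  have e2 : x - (x - α • v) = α • v := by abel
  rw [e1, e2] at h
  have eA : ‖u + α • v‖ ^ 2 = ‖u‖ ^ 2 + 2 * (α * ⟪u, v⟫_ℝ) + α ^ 2 * ‖v‖ ^ 2 := by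
    rw [norm_add_sq_real, real_inner_smul_right, norm_smul, Real.norm_eq_abs,
      mul_pow, sq_abs]
  have eB : ‖α • v‖ ^ 2 = α ^ 2 * ‖v‖ ^ 2 := by
    rw [norm_smul, Real.norm_eq_abs, mul_pow, sq_abs]
  rw [eA, eB] at h
  have hdesc : f xp ≤ f x + ⟪v, u⟫_ℝ + L / 2 * ‖u‖ ^ 2 := by
    have := descent_lemma f f' hf_diff hf_lip x xp
    rw [← hu, ← hv] at this
    exact this
  have hLα : L ≤ 1 / α := by
    rw [le_div_iff₀ hL] at hαL
    rw [le_div_iff₀ hα]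
    linarith [mul_comm α L]
  have hreal : gp + f xp ≤ gx + f x := by
    have hc : ⟪u, v⟫_ℝ = ⟪v, u⟫_ℝ := real_inner_comm v u
    have hα' : (0:ℝ) < 2 * α := by linarith
    have hexp : 1 / (2 * α) * (‖u‖ ^ 2 + 2 * (α * ⟪u, v⟫_ℝ) + α ^ 2 * ‖v‖ ^ 2)
        = 1 / (2 * α) * ‖u‖ ^ 2 + ⟪u, v⟫_ℝ + 1 / (2 * α) * (α ^ 2 * ‖v‖ ^ 2) := by
      field_simp
    rw [hexp] at h
    have hkey : L / 2 * ‖u‖ ^ 2 ≤ 1 / (2 * α) * ‖u‖ ^ 2 := by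
      apply mul_le_mul_of_nonneg_right _ (sq_nonneg _)
      rw [div_le_div_iff₀ two_pos hα']
      rw [le_div_iff₀ hα] at hLα
      linarith
    linarith
  rw [hgp_eq, hgx_eq, ← EReal.coe_add, ← EReal.coe_add, EReal.coe_le_coe_iff]
  exact hreal

/-- A proximal-gradient step decreases the objective value `(g+f)`; in particular the
objective values along a proximal-gradient sequence are nonincreasing. -/
theorem proxGrad_objective_decrease {d : ℕ} {L : ℝ}
    (g : EuclideanSpace ℝ (Fin d) → EReal)
    (hg_proper : ERealProper g) (hg_convex : ERealConvex g)
    (hg_lsc : LowerSemicontinuous g)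
    (f : EuclideanSpace ℝ (Fin d) → ℝ)
    (f' : EuclideanSpace ℝ (Fin d) → EuclideanSpace ℝ (Fin d))
    (hf_convex : ConvexOn ℝ Set.univ f)
    (hf_diff : ∀ y, HasGradientAt f (f' y) y)
    (hf_lip : ∀ x y, ‖f' x - f' y‖ ≤ L * ‖x - y‖)
    (x : EuclideanSpace ℝ (Fin d)) (α : ℝ) (hα : 0 < α) (hαL : α ≤ 1 / L)
    (xp : EuclideanSpace ℝ (Fin d))
    (hxp : IsProx g α (x - α • f' x) xp)
    (xseq : ℕ → EuclideanSpace ℝ (Fin d)) (αseq : ℕ → ℝ)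
    (hαseq : ∀ k, 0 < αseq k ∧ αseq k ≤ 1 / L)
    (hxseq : ∀ k, IsProx g (αseq k) (xseq k - αseq k • f' (xseq k)) (xseq (k + 1))) :
    g xp + (f xp : EReal) ≤ g x + (f x : EReal) ∧
      Antitone fun k => g (xseq k) + (f (xseq k) : EReal) := by
  have hL : 0 < L := by
    rcases lt_trichotomy L 0 with h | h | h
    · exfalso
      have : (1:ℝ) / L < 0 := div_neg_of_pos_of_neg one_pos h
      linarith
    · exfalso
      rw [h] at hαL
      simp at hαL
      linarith
    · exact h
  constructor
  · exact prox_step g hg_proper f f' hf_diff hf_lip hL x α hα hαL xp hxp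
  · apply antitone_nat_of_succ_le
    intro k
    exact prox_step g hg_proper f f' hf_diff hf_lip hL (xseq k) (αseq k)
      (hαseq k).1 (hαseq k).2 _ (hxseq k)
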